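/- Let a > √3. Then there exists a nonconstant differentiable solution (M₁, M₂, M₃) : ℝ → ℝ³ of the reduced Fefferman equations with P = 1, i.e. M₁' = -M₂(M₃/a + 3/2), M₂' = M₁(a·M₃ + 3/2), M₃' = (1/a - a)·M₁·M₂, satisfying H_a(M₁(t), M₂(t), M₃(t), 1) = 0 for all t, and which is homoclinic to the equilibrium E_a = (0, 0, -(3/8)(a + 1/a)): the solution tends to E_a as t → +∞ and as t → -∞. -/

import Mathlib

open Real Filter

set_option maxHeartbeats 2000000 in
theorem homoclinic_orbit_exists (a : ℝ) (ha : Real.sqrt 3 < a) :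
    ∃ M₁ M₂ M₃ : ℝ → ℝ,
      (∀ t, HasDerivAt M₁ (-(M₂ t) * (M₃ t / a + 3/2)) t) ∧
      (∀ t, HasDerivAt M₂ (M₁ t * (a * M₃ t + 3/2)) t) ∧
      (∀ t, HasDerivAt M₃ ((1/a - a) * M₁ t * M₂ t) t) ∧
      (∃ t s : ℝ, (M₁ t, M₂ t, M₃ t) ≠ (M₁ s, M₂ s, M₃ s)) ∧
      (∀ t, (1/2) * (a * M₁ t ^ 2 + (1/a) * M₂ t ^ 2 - 3 * M₃ t
        - (9/8) * (a + 1/a)) = 0) ∧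
      Filter.Tendsto (fun t => (M₁ t, M₂ t, M₃ t)) Filter.atTop
        (nhds (0, 0, -(3/8) * (a + 1/a))) ∧
      Filter.Tendsto (fun t => (M₁ t, M₂ t, M₃ t)) Filter.atBot
        (nhds (0, 0, -(3/8) * (a + 1/a))) := by
  have ha0 : 0 < a := lt_trans (Real.sqrt_pos.mpr (by norm_num)) ha
  have ha3 : 3 < a ^ 2 := (Real.sqrt_lt' ha0).mp ha
  have ha1 : 1 < a := by nlinarith
  have haa : (0:ℝ) < a ^ 2 - 1 := by nlinarith
  have hane : a ≠ 0 := ha0.ne'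
  have haane : a ^ 2 - 1 ≠ 0 := haa.ne'
  obtain ⟨p, hp⟩ : ∃ p : ℝ, p = (9 * a ^ 2 - 3) / (4 * a) := ⟨_, rfl⟩
  obtain ⟨q, hq⟩ : ∃ q : ℝ, q = 3 / 4 * (a ^ 2 - 3) := ⟨_, rfl⟩
  have hp0 : 0 < p := by rw [hp]; apply div_pos <;> nlinarith
  have hq0 : 0 < q := by rw [hq]; nlinarith
  obtain ⟨c, hc⟩ : ∃ c : ℝ, c = 3 * (a ^ 2 - 1) / (2 * p * q) := ⟨_, rfl⟩
  have hc0 : 0 < c := by rw [hc]; apply div_pos <;> [nlinarith; positivity]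
  obtain ⟨m, hm⟩ : ∃ m : ℝ, m = Real.sqrt (p * q / (4 * a)) := ⟨_, rfl⟩
  have hm0 : 0 < m := by rw [hm]; exact Real.sqrt_pos.mpr (by positivity)
  have hmsq : m ^ 2 = p * q / (4 * a) := by rw [hm]; exact Real.sq_sqrt (by positivity)
  obtain ⟨k1, hk1d⟩ : ∃ k : ℝ, k = Real.sqrt (2 * p * c / (a ^ 2 - 1)) := ⟨_, rfl⟩
  obtain ⟨k2, hk2d⟩ : ∃ k : ℝ, k = Real.sqrt (2 * a * q * c / (a ^ 2 - 1)) := ⟨_, rfl⟩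
  have hk10 : 0 < k1 := by rw [hk1d]; exact Real.sqrt_pos.mpr (by positivity)
  have hk20 : 0 < k2 := by rw [hk2d]; exact Real.sqrt_pos.mpr (by positivity)
  have hk1sq : k1 ^ 2 = 2 * p * c / (a ^ 2 - 1) := by
    rw [hk1d]; exact Real.sq_sqrt (by positivity)
  have hk2sq : k2 ^ 2 = 2 * a * q * c / (a ^ 2 - 1) := by
    rw [hk2d]; exact Real.sq_sqrt (by positivity)
  have hpne : p ≠ 0 := hp0.ne'
  have hqne : q ≠ 0 := hq0.ne'
  have h93 : 9 * a ^ 2 - 3 ≠ 0 := by nlinarith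
  have ha3' : a ^ 2 - 3 ≠ 0 := by nlinarith
  have I1 : k1 * m = k2 * p / (2 * a) := by
    have h1 : (k1 * m) ^ 2 = (k2 * p / (2 * a)) ^ 2 := by
      have e : (k1 * m) ^ 2 = k1 ^ 2 * m ^ 2 := by ring
      have e2 : (k2 * p / (2 * a)) ^ 2 = k2 ^ 2 * p ^ 2 / (4 * a ^ 2) := by ring
      rw [e, e2, hk1sq, hmsq, hk2sq]
      field_simp
    exact (sq_eq_sq₀ (by positivity) (by positivity)).mp h1
  have I2 : k2 * m = k1 * q / 2 := by
    have h1 : (k2 * m) ^ 2 = (k1 * q / 2) ^ 2 := by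
      have e : (k2 * m) ^ 2 = k2 ^ 2 * m ^ 2 := by ring
      have e2 : (k1 * q / 2) ^ 2 = k1 ^ 2 * q ^ 2 / 4 := by ring
      rw [e, e2, hk2sq, hmsq, hk1sq]
      field_simp
    exact (sq_eq_sq₀ (by positivity) (by positivity)).mp h1
  have I3 : 4 * c * m = (a ^ 2 - 1) / a * (k1 * k2) := by
    have h1 : (4 * c * m) ^ 2 = ((a ^ 2 - 1) / a * (k1 * k2)) ^ 2 := by
      have e : (4 * c * m) ^ 2 = 16 * c ^ 2 * m ^ 2 := by ring
      have e2 : ((a ^ 2 - 1) / a * (k1 * k2)) ^ 2 = ((a ^ 2 - 1) / a) ^ 2 * k1 ^ 2 * k2 ^ 2 := by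
        ring
      rw [e, e2, hmsq, hk1sq, hk2sq]
      field_simp
      ring
    exact (sq_eq_sq₀ (by positivity) (by positivity)).mp h1
  have I1c : 2 * a * (k1 * m) = k2 * p := by rw [I1]; field_simp
  have I2c : 2 * (k2 * m) = k1 * q := by rw [I2]; ring
  have I3c : 4 * c * m * a = (a ^ 2 - 1) * (k1 * k2) := by rw [I3]; field_simp
  obtain ⟨V, hV⟩ : ∃ V : ℝ → ℝ, V = fun t => 2 * c * Real.cosh (m * t) ^ 2 - 1 / p :=
    ⟨_, rfl⟩
  have hcp : 1 / p < 2 * c := by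
    have e1 : 2 * c = 3 * (a ^ 2 - 1) / (p * q) := by rw [hc]; ring
    rw [e1, div_lt_div_iff₀ hp0 (mul_pos hp0 hq0)]
    have : q < 3 * (a ^ 2 - 1) := by rw [hq]; nlinarith
    nlinarith
  have hVpos : ∀ t, 0 < V t := by
    intro t
    have h1 := Real.one_le_cosh (m * t)
    have h2 : (1:ℝ) ≤ Real.cosh (m * t) ^ 2 := by nlinarith
    have h3 : 2 * c - 1 / p ≤ V t := by rw [hV]; dsimp only; nlinarith
    linarith
  have hlin : ∀ t : ℝ, HasDerivAt (fun t : ℝ => m * t) m t := by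
    intro t
    simpa using (hasDerivAt_id t).const_mul m
  have hCd : ∀ t : ℝ, HasDerivAt (fun t => Real.cosh (m * t)) (Real.sinh (m * t) * m) t :=
    fun t => (Real.hasDerivAt_cosh (m * t)).comp t (hlin t)
  have hSd : ∀ t : ℝ, HasDerivAt (fun t => Real.sinh (m * t)) (Real.cosh (m * t) * m) t :=
    fun t => (Real.hasDerivAt_sinh (m * t)).comp t (hlin t)
  have hVd : ∀ t : ℝ, HasDerivAt V (4 * c * m * (Real.cosh (m * t) * Real.sinh (m * t))) t := by
    intro t
    have h1 := (((hCd t).pow 2).const_mul (2 * c)).sub_const (1 / p)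
    rw [hV]
    refine HasDerivAt.congr_deriv h1 (Eq.symm ?_)
    push_cast
    ring
  have hsc : ∀ x : ℝ, Real.sinh x ≤ Real.cosh x := fun x => by
    nlinarith [Real.cosh_sub_sinh x, Real.exp_pos (-x)]
  have main : ∀ l : Filter ℝ, Tendsto (fun t => Real.cosh (m * t)) l atTop →
      Tendsto (fun t => (k1 * Real.cosh (m * t) / V t, (k2 * Real.sinh (m * t) / V t,
        1 / V t - 3/8 * (a + 1/a)))) l (nhds (0, (0, -(3/8) * (a + 1/a)))) := by
    intro l hco
    have hVtop : Tendsto (fun t => V t) l atTop := by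
      have h2 : Tendsto (fun x : ℝ => 2 * c * x ^ 2) atTop atTop :=
        (tendsto_pow_atTop (by norm_num : (2:ℕ) ≠ 0)).const_mul_atTop (by positivity)
      have h1 : Tendsto (fun x : ℝ => 2 * c * x ^ 2 - 1 / p) atTop atTop := by
        simpa [sub_eq_add_neg] using tendsto_atTop_add_const_right atTop (-(1/p)) h2
      have h3 := h1.comp hco
      simpa [hV, Function.comp_def] using h3
    have hgen : ∀ k : ℝ, Tendsto (fun t => k * Real.cosh (m * t) / V t) l (nhds 0) := by
      intro k
      have hratio : Tendsto (fun t => V t / Real.cosh (m * t)) l atTop := by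
        have hlow : Tendsto (fun t => 2 * c * Real.cosh (m * t) - 1 / p) l atTop := by
          have h2 : Tendsto (fun x : ℝ => 2 * c * x) atTop atTop :=
            tendsto_id.const_mul_atTop (by positivity)
          have h1 : Tendsto (fun x : ℝ => 2 * c * x - 1 / p) atTop atTop := by
            simpa [sub_eq_add_neg] using tendsto_atTop_add_const_right atTop (-(1/p)) h2
          exact h1.comp hco
        apply tendsto_atTop_mono _ hlow
        intro t
        have hc1 : (1:ℝ) ≤ Real.cosh (m * t) := Real.one_le_cosh (m * t)
        have hc2 : (0:ℝ) < Real.cosh (m * t) := by linarith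
        rw [hV]
        dsimp only
        rw [le_div_iff₀ hc2]
        have hip : 0 < 1 / p := by positivity
        nlinarith
      have h0 := Filter.Tendsto.div_atTop
        (tendsto_const_nhds : Tendsto (fun _ : ℝ => k) l (nhds k)) hratio
      have he : (fun t => k / (V t / Real.cosh (m * t)))
          = fun t => k * Real.cosh (m * t) / V t := by
        funext t
        rw [div_div_eq_mul_div]
      rw [← he]
      exact h0
    have h2 : Tendsto (fun t => k2 * Real.sinh (m * t) / V t) l (nhds 0) := by
      have hub : ∀ t, k2 * Real.sinh (m * t) / V t ≤ k2 * Real.cosh (m * t) / V t := by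
        intro t
        have e : k2 * Real.cosh (m * t) / V t - k2 * Real.sinh (m * t) / V t
            = k2 * (Real.cosh (m * t) - Real.sinh (m * t)) / V t := by ring
        have pos : 0 ≤ k2 * (Real.cosh (m * t) - Real.sinh (m * t)) / V t := by
          rw [Real.cosh_sub_sinh]
          exact div_nonneg (mul_nonneg hk20.le (Real.exp_pos _).le) (hVpos t).le
        linarith [e ▸ pos]
      have hlb : ∀ t, -(k2 * Real.cosh (m * t) / V t) ≤ k2 * Real.sinh (m * t) / V t := by
        intro t
        have e : k2 * Real.sinh (m * t) / V t + k2 * Real.cosh (m * t) / V t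
            = k2 * (Real.sinh (m * t) + Real.cosh (m * t)) / V t := by ring
        have pos : 0 ≤ k2 * (Real.sinh (m * t) + Real.cosh (m * t)) / V t := by
          rw [Real.sinh_add_cosh]
          exact div_nonneg (mul_nonneg hk20.le (Real.exp_pos _).le) (hVpos t).le
        linarith [e ▸ pos]
      have hneg : Tendsto (fun t => -(k2 * Real.cosh (m * t) / V t)) l (nhds 0) := by
        simpa using (hgen k2).neg
      exact tendsto_of_tendsto_of_tendsto_of_le_of_le hneg (hgen k2) hlb hub
    have h3 : Tendsto (fun t => 1 / V t - 3/8 * (a + 1/a)) l (nhds (-(3/8) * (a + 1/a))) := by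
      have h4 : Tendsto (fun t => 1 / V t) l (nhds 0) := by
        simpa [one_div, Function.comp_def] using tendsto_inv_atTop_zero.comp hVtop
      have h5 := h4.sub_const (3/8 * (a + 1/a))
      have e : -(3/8 : ℝ) * (a + 1/a) = 0 - 3/8 * (a + 1/a) := by ring
      rw [e]
      exact h5
    exact (hgen k1).prodMk_nhds (h2.prodMk_nhds h3)
  refine ⟨fun t => k1 * Real.cosh (m * t) / V t, fun t => k2 * Real.sinh (m * t) / V t,
    fun t => 1 / V t - 3/8 * (a + 1/a), ?_, ?_, ?_, ?_, ?_, ?_, ?_⟩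
  · -- ODE 1
    intro t
    dsimp only
    have hD := ((hCd t).const_mul k1).div (hVd t) (hVpos t).ne'
    refine HasDerivAt.congr_deriv hD (Eq.symm ?_)
    have hcs := Real.cosh_sq_sub_sinh_sq (m * t)
    set X := Real.cosh (m * t) with hX
    set Y := Real.sinh (m * t) with hY
    have hVt : V t = 2 * c * X ^ 2 - 1 / p := by rw [hV]
    have hvne : 2 * c * X ^ 2 - 1 / p ≠ 0 := by rw [← hVt]; exact (hVpos t).ne'
    have e0 : 2 * c * X ^ 2 * p - 1 = (2 * c * X ^ 2 - 1 / p) * p := by field_simp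
    have hvne' : 2 * c * X ^ 2 * p - 1 ≠ 0 := by rw [e0]; exact mul_ne_zero hvne hpne
    have hm' : m = k2 * p / (2 * a * k1) := by
      field_simp
      linear_combination I1c
    rw [hVt]
    field_simp [hvne']
    rw [hm', hc, hp, hq]
    field_simp
    ring
  · -- ODE 2
    intro t
    dsimp only
    have hD := ((hSd t).const_mul k2).div (hVd t) (hVpos t).ne'
    refine HasDerivAt.congr_deriv hD (Eq.symm ?_)
    have hcs := Real.cosh_sq_sub_sinh_sq (m * t)
    set X := Real.cosh (m * t) with hX
    set Y := Real.sinh (m * t) with hY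
    have hVt : V t = 2 * c * X ^ 2 - 1 / p := by rw [hV]
    have hvne : 2 * c * X ^ 2 - 1 / p ≠ 0 := by rw [← hVt]; exact (hVpos t).ne'
    have e0 : 2 * c * X ^ 2 * p - 1 = (2 * c * X ^ 2 - 1 / p) * p := by field_simp
    have hvne' : 2 * c * X ^ 2 * p - 1 ≠ 0 := by rw [e0]; exact mul_ne_zero hvne hpne
    have hm' : m = k1 * q / (2 * k2) := by
      field_simp
      linear_combination I2c
    have hY2 : Y ^ 2 = X ^ 2 - 1 := by linarith
    have hX2 : (1:ℝ) ≤ X ^ 2 := by nlinarith [Real.one_le_cosh (m * t)]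
    have hden : 0 < X ^ 2 * 4 * (a ^ 2 - 1) - (a ^ 2 - 3) := by
      nlinarith [mul_nonneg (sub_nonneg.2 hX2) haa.le]
    rw [hVt]
    field_simp [hvne']
    rw [hm', hc, hp, hq]
    field_simp [hden.ne']
    ring_nf
    rw [hY2]
    ring
  · -- ODE 3
    intro t
    dsimp only
    have h1 : HasDerivAt (fun t => 1 / V t - 3/8 * (a + 1/a))
        ((0 * V t - 1 * (4 * c * m * (Real.cosh (m * t) * Real.sinh (m * t)))) / V t ^ 2) t :=
      ((hasDerivAt_const t (1:ℝ)).div (hVd t) (hVpos t).ne').sub_const (3/8 * (a + 1/a))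
    convert h1 using 1
    set X := Real.cosh (m * t) with hX
    set Y := Real.sinh (m * t) with hY
    have hVt : V t = 2 * c * X ^ 2 - 1 / p := by rw [hV]
    have hvne : 2 * c * X ^ 2 - 1 / p ≠ 0 := by rw [← hVt]; exact (hVpos t).ne'
    have e0 : 2 * c * X ^ 2 * p - 1 = (2 * c * X ^ 2 - 1 / p) * p := by field_simp
    have hvne' : 2 * c * X ^ 2 * p - 1 ≠ 0 := by rw [e0]; exact mul_ne_zero hvne hpne
    have hm' : m = (a ^ 2 - 1) * (k1 * k2) / (4 * c * a) := by
      field_simp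
      linear_combination I3c
    rw [hVt]
    field_simp [hvne']
    rw [hm', hc, hp, hq]
    field_simp
    ring
  · -- nonconstant
    refine ⟨1, 0, ?_⟩
    have hs : 0 < Real.sinh (m * 1) := by
      rw [Real.sinh_pos_iff]; linarith [hm0]
    have h2 : k2 * Real.sinh (m * 1) / V 1 ≠ k2 * Real.sinh (m * 0) / V 0 := by
      have hz : Real.sinh (m * 0) = 0 := by rw [mul_zero, Real.sinh_zero]
      rw [hz, mul_zero, zero_div]
      exact (div_pos (mul_pos hk20 hs) (hVpos 1)).ne'
    intro h
    exact h2 (congrArg (fun z => z.2.1) h)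
  · -- light cone
    intro t
    dsimp only
    have hcs := Real.cosh_sq_sub_sinh_sq (m * t)
    set X := Real.cosh (m * t) with hX
    set Y := Real.sinh (m * t) with hY
    have hVt : V t = 2 * c * X ^ 2 - 1 / p := by rw [hV]
    have hvne : 2 * c * X ^ 2 - 1 / p ≠ 0 := by rw [← hVt]; exact (hVpos t).ne'
    have e0 : 2 * c * X ^ 2 * p - 1 = (2 * c * X ^ 2 - 1 / p) * p := by field_simp
    have hvne' : 2 * c * X ^ 2 * p - 1 ≠ 0 := by rw [e0]; exact mul_ne_zero hvne hpne
    have hY2 : Y ^ 2 = X ^ 2 - 1 := by linarith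
    have hWne : V t ≠ 0 := (hVpos t).ne'
    have key : a * (k1 ^ 2 * X ^ 2) + k2 ^ 2 * Y ^ 2 / a = 3 * V t := by
      rw [hVt, hk1sq, hk2sq, hY2, hc, hp, hq]
      field_simp
      ring
    have e1 : a * (k1 * X / V t) ^ 2 + 1/a * (k2 * Y / V t) ^ 2
        = (a * (k1 ^ 2 * X ^ 2) + k2 ^ 2 * Y ^ 2 / a) / (V t) ^ 2 := by
      rw [div_pow, div_pow]; ring
    have e2 : (a * (k1 ^ 2 * X ^ 2) + k2 ^ 2 * Y ^ 2 / a) / (V t) ^ 2 = 3 / V t := by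
      rw [key]
      field_simp
    rw [e1, e2]
    ring
  · -- atTop
    have hco : Tendsto (fun t => Real.cosh (m * t)) atTop atTop := by
      have hexp : Tendsto (fun t => Real.exp (m * t) / 2) atTop atTop :=
        (Real.tendsto_exp_atTop.comp (tendsto_id.const_mul_atTop hm0)).atTop_div_const
          (by norm_num)
      apply tendsto_atTop_mono _ hexp
      intro t
      nlinarith [Real.cosh_add_sinh (m * t), Real.cosh_sub_sinh (m * t),
        Real.exp_pos (-(m * t))]
    exact main atTop hco
  · -- atBot
    have hco : Tendsto (fun t => Real.cosh (m * t)) atBot atTop := by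
      have hexp : Tendsto (fun t => Real.exp (-(m * t)) / 2) atBot atTop := by
        have h1 : Tendsto (fun t : ℝ => -(m * t)) atBot atTop :=
          tendsto_neg_atBot_atTop.comp (tendsto_id.const_mul_atBot hm0)
        exact (Real.tendsto_exp_atTop.comp h1).atTop_div_const (by norm_num)
      apply tendsto_atTop_mono _ hexp
      intro t
      nlinarith [Real.cosh_add_sinh (m * t), Real.cosh_sub_sinh (m * t),
        Real.exp_pos (m * t)]
    exact main atBot hco
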